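/- For the lazy random walk Z on a connected graph G with n vertices, m edges and diameter D, the second largest eigenvalue of its transition matrix P satisfies α₂(P) ≤ 1 - 1/(2nmD). -/

import Mathlib

open Finset

lemma list_sq_sum_le (l : List ℝ) :
    l.sum ^ 2 ≤ l.length * (l.map (· ^ 2)).sum := by
  induction l with
  | nil => simp
  | cons a l ih =>
    simp only [List.sum_cons, List.length_cons, List.map_cons, Nat.cast_add, Nat.cast_one]
    have hq : 0 ≤ (l.map (· ^ 2)).sum := by
      apply List.sum_nonneg; intro x hx
      obtain ⟨y, _, rfl⟩ := List.mem_map.mp hx; positivity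
    have hk : (0:ℝ) ≤ (l.length : ℝ) := Nat.cast_nonneg _
    rcases List.eq_nil_or_concat l with rfl | hne
    · simp
    · have h0 : (0:ℝ) < (l.length : ℝ) := by
        obtain ⟨t, b, rfl⟩ := hne
        push_cast [List.length_concat]
        linarith [Nat.cast_nonneg (α := ℝ) t.length]
      nlinarith [sq_nonneg ((l.length : ℝ) * a - l.sum), ih, sq_nonneg a]

lemma walk_telescope {V : Type*} {G : SimpleGraph V} (v : V → ℝ) :
    ∀ {a b : V} (p : G.Walk a b),
      (p.darts.map (fun d => v d.fst - v d.snd)).sum = v a - v b := by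
  intro a b p
  induction p with
  | nil => simp
  | cons h p ih => simp [ih]

lemma swap_sum {V : Type*} [Fintype V] [DecidableEq V] (G : SimpleGraph V)
    [DecidableRel G.Adj] (f : V → V → ℝ) :
    ∑ x, ∑ y ∈ G.neighborFinset x, f x y
      = ∑ p ∈ Finset.univ.filter (fun p : V × V => G.Adj p.1 p.2), f p.1 p.2 := by
  rw [Finset.sum_filter, Fintype.sum_prod_type]
  refine Finset.sum_congr rfl fun x _ => ?_
  rw [SimpleGraph.neighborFinset_eq_filter, Finset.sum_filter]

lemma swap_sum' {V : Type*} [Fintype V] [DecidableEq V] (G : SimpleGraph V)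
    [DecidableRel G.Adj] (f : V → V → ℝ) :
    ∑ x, ∑ y ∈ G.neighborFinset x, f x y = ∑ x, ∑ y ∈ G.neighborFinset x, f y x := by
  rw [swap_sum, swap_sum]
  refine Finset.sum_equiv (Equiv.prodComm V V) ?_ ?_
  · intro p; simp [G.adj_comm]
  · intro p hp; rfl

set_option maxHeartbeats 1000000 in
/-- For the lazy random walk `Z` on a connected graph `G` with `n` vertices, `m` edges and
diameter `D`, the second largest eigenvalue of its transition matrix `P` satisfies
`α₂(P) ≤ 1 - 1/(2nmD)` (every eigenvalue of `P` other than `1` obeys this bound). -/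
theorem stmt_11 {V : Type*} [Fintype V] [DecidableEq V]
    (G : SimpleGraph V) [DecidableRel G.Adj] (hconn : G.Connected)
    (hcard : 2 ≤ Fintype.card V)
    (n m D : ℕ) (hn : n = Fintype.card V) (hm : m = G.edgeFinset.card) (hD : D = G.diam)
    (P : Matrix V V ℝ)
    (hP : ∀ x y, P x y =
      if x = y then 1 - (G.degree x : ℝ) / m
      else if G.Adj x y then 1 / m else 0) :
    ∀ (μ : ℝ) (v : V → ℝ), v ≠ 0 → P.mulVec v = μ • v → μ ≠ 1 →
      μ ≤ 1 - 1 / (2 * n * m * D) := by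
  intro μ v hv hPv hμ
  -- an edge exists, so `1 ≤ m`
  have hm1 : 1 ≤ m := by
    obtain ⟨a, b, hab⟩ := Fintype.exists_pair_of_one_lt_card (by omega : 1 < Fintype.card V)
    obtain ⟨w⟩ := hconn.preconnected a b
    have hnil : ¬ w.Nil := SimpleGraph.Walk.not_nil_of_ne hab
    have hadj : G.Adj a (w.getVert 1) := w.adj_snd hnil
    have he : s(a, w.getVert 1) ∈ G.edgeFinset := by
      rw [SimpleGraph.mem_edgeFinset]; exact hadj
    have := Finset.card_pos.mpr ⟨_, he⟩
    omega
  have hM : (0:ℝ) < (m:ℝ) := by exact_mod_cast Nat.lt_of_lt_of_le Nat.zero_lt_one hm1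
  have key : ∀ x, ∑ y ∈ G.neighborFinset x, (v x - v y) = ((m:ℝ) * (1 - μ)) * v x := by
    intro x
    have h1 : ∑ y, P x y * v y = μ * v x := by
      have := congrFun hPv x
      simpa [Matrix.mulVec, dotProduct, mul_comm] using this
    have h2 : ∑ y, P x y * v y
        = (1 - (G.degree x : ℝ) / m) * v x + (1/(m:ℝ)) * ∑ y ∈ G.neighborFinset x, v y := by
      rw [← Finset.add_sum_erase Finset.univ (fun y => P x y * v y) (Finset.mem_univ x)]
      congr 1
      · rw [hP x x]; simp
      · have : ∀ y ∈ Finset.univ.erase x, P x y * v y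
            = (if G.Adj x y then (1/(m:ℝ)) * v y else 0) := by
          intro y hy
          rw [hP x y, if_neg (Ne.symm (Finset.mem_erase.mp hy).1)]
          split <;> ring
        rw [Finset.sum_congr rfl this, Finset.sum_erase _ (by simp)]
        rw [SimpleGraph.neighborFinset_eq_filter, Finset.sum_filter, Finset.mul_sum]
        exact Finset.sum_congr rfl fun y _ => by split <;> ring
    rw [h2] at h1
    have h3 : ∑ y ∈ G.neighborFinset x, (v x - v y)
        = (G.degree x : ℝ) * v x - ∑ y ∈ G.neighborFinset x, v y := by
      rw [Finset.sum_sub_distrib, Finset.sum_const, nsmul_eq_mul,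
        SimpleGraph.card_neighborFinset_eq_degree]
    rw [h3]
    field_simp at h1 ⊢
    nlinarith [h1]
  set lam : ℝ := (m:ℝ) * (1 - μ) with hlam
  have hlam0 : lam ≠ 0 := by
    intro h
    rcases mul_eq_zero.mp h with h | h
    · exact absurd h (ne_of_gt hM)
    · exact hμ (by linarith)
  set S2 : ℝ := ∑ x, v x ^ 2 with hS2
  have hS2pos : 0 < S2 := by
    obtain ⟨x, hx⟩ : ∃ x, v x ≠ 0 := by
      by_contra h; push_neg at h; exact hv (funext h)
    exact Finset.sum_pos' (fun y _ => sq_nonneg _) ⟨x, Finset.mem_univ x, by positivity⟩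
  have hadd : ∀ f g : V → V → ℝ,
      ∑ x, ∑ y ∈ G.neighborFinset x, (f x y + g x y)
        = (∑ x, ∑ y ∈ G.neighborFinset x, f x y)
          + ∑ x, ∑ y ∈ G.neighborFinset x, g x y := by
    intro f g
    rw [← Finset.sum_add_distrib]
    exact Finset.sum_congr rfl fun x _ => Finset.sum_add_distrib
  -- sum of v is zero
  have hsum0 : ∑ x, v x = 0 := by
    have hswap := swap_sum' G (fun x y => v x - v y)
    have h2 : ∑ x, ∑ y ∈ G.neighborFinset x, ((v x - v y) + (v y - v x)) = 0 := by
      simp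
    rw [hadd] at h2
    rw [← hswap] at h2
    have h3 : ∑ x, ∑ y ∈ G.neighborFinset x, (v x - v y) = lam * ∑ x, v x := by
      rw [Finset.mul_sum]; exact Finset.sum_congr rfl fun x _ => key x
    rw [h3] at h2
    have : lam * ∑ x, v x = 0 := by linarith
    exact (mul_eq_zero.mp this).resolve_left hlam0
  -- the quadratic form identity
  set Q : ℝ := ∑ x, ∑ y ∈ G.neighborFinset x, (v x - v y)^2 with hQ
  have hQval : Q = 2 * lam * S2 := by
    have e2 : ∑ x, ∑ y ∈ G.neighborFinset x, ((v x - v y) * v x) = lam * S2 := by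
      rw [hS2, Finset.mul_sum]
      refine Finset.sum_congr rfl fun x _ => ?_
      rw [← Finset.sum_mul, key x]; ring
    have e3 : ∑ x, ∑ y ∈ G.neighborFinset x, ((v y - v x) * v y) = lam * S2 := by
      rw [swap_sum' G (fun x y => (v y - v x) * v y)]
      exact e2
    have e4 : ∑ x, ∑ y ∈ G.neighborFinset x,
        (((v x - v y) * v x) + ((v y - v x) * v y)) = 2 * lam * S2 := by
      rw [hadd, e2, e3]; ring
    rw [hQ, ← e4]
    refine Finset.sum_congr rfl fun x _ => Finset.sum_congr rfl fun y _ => by ring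
  -- choose x0 maximizing v^2
  have hNV : Nonempty V := Fintype.card_pos_iff.mp (by omega)
  obtain ⟨x0, -, hx0⟩ := Finset.exists_max_image Finset.univ (fun x => v x ^ 2)
    Finset.univ_nonempty
  have hS2n : S2 ≤ (n:ℝ) * v x0 ^ 2 := by
    have := Finset.sum_le_card_nsmul Finset.univ (fun x => v x ^ 2) (v x0 ^ 2)
      (fun x _ => hx0 x (Finset.mem_univ x))
    rw [Finset.card_univ, ← hn] at this
    simpa [nsmul_eq_mul] using this
  have hvx0 : v x0 ≠ 0 := by
    intro h
    rw [h] at hS2n; simp at hS2n; linarith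
  obtain ⟨y0, hy0⟩ : ∃ y0, v x0 * v y0 ≤ 0 := by
    by_contra h; push_neg at h
    have hpos : 0 < ∑ y, v x0 * v y :=
      Finset.sum_pos (fun y _ => h y) Finset.univ_nonempty
    rw [← Finset.mul_sum, hsum0, mul_zero] at hpos
    exact lt_irrefl _ hpos
  have hne : x0 ≠ y0 := by
    rintro rfl
    have : v x0 * v x0 = 0 := le_antisymm hy0 (mul_self_nonneg _)
    exact hvx0 (by nlinarith)
  have hsq : v x0 ^ 2 ≤ (v x0 - v y0) ^ 2 := by nlinarith
  -- a shortest path from x0 to y0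
  obtain ⟨w, hw⟩ := hconn.exists_walk_length_eq_dist x0 y0
  set p := w.bypass with hpdef
  have hp : p.IsPath := w.bypass_isPath
  have hediam : G.ediam ≠ ⊤ := by
    obtain ⟨u1, u2, hu⟩ := G.exists_edist_eq_ediam_of_finite
    rw [← hu]
    exact SimpleGraph.edist_ne_top_iff_reachable.mpr (hconn.preconnected u1 u2)
  have hlenD : p.length ≤ D := by
    calc p.length ≤ w.length := w.length_bypass_le
    _ = G.dist x0 y0 := hw
    _ ≤ G.diam := SimpleGraph.dist_le_diam hediam
    _ = D := hD.symm
  have hD1 : 1 ≤ D := by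
    have h1 := hconn.pos_dist_of_ne hne
    have h2 := SimpleGraph.dist_le_diam (u := x0) (v := y0) hediam
    omega
  -- telescoping plus Cauchy-Schwarz along the path
  set l : List ℝ := p.darts.map (fun d => v d.fst - v d.snd) with hl
  have htel : l.sum = v x0 - v y0 := walk_telescope v p
  have hCS : (v x0 - v y0) ^ 2 ≤ (p.length : ℝ) * (l.map (· ^ 2)).sum := by
    rw [← htel]
    have := list_sq_sum_le l
    rwa [hl, List.length_map, SimpleGraph.Walk.length_darts] at this
  -- the path's darts (and their reverses) form distinct adjacent pairs
  have hdnd : p.darts.Nodup := List.Nodup.of_map _ hp.edges_nodup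
  have hedge_inj : ∀ d ∈ p.darts, ∀ e ∈ p.darts, d.edge = e.edge → d = e :=
    List.inj_on_of_nodup_map hp.edges_nodup
  set L2 : List (V × V) :=
    p.darts.map (fun d => d.toProd) ++ p.darts.map (fun d => d.toProd.swap) with hL2
  set g : V × V → ℝ := fun q => (v q.1 - v q.2) ^ 2 with hg
  have hL2nd : L2.Nodup := by
    rw [hL2, List.nodup_append]
    refine ⟨hdnd.map (SimpleGraph.Dart.toProd_injective), hdnd.map ?_, ?_⟩
    · exact fun d e h => SimpleGraph.Dart.toProd_injective (Prod.swap_injective h)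
    · intro q hq1 q' hq2 hqq; subst hqq
      obtain ⟨d, hd, rfl⟩ := List.mem_map.mp hq1
      obtain ⟨e, he, heq⟩ := List.mem_map.mp hq2
      have hedge : d.edge = e.edge := by
        rw [SimpleGraph.Dart.edge, SimpleGraph.Dart.edge, ← heq, Sym2.mk_prod_swap_eq]
        rfl
      have : d = e := hedge_inj d hd e he hedge
      subst this
      have : d.toProd.1 = d.toProd.2 := by
        have h1 : d.toProd.1 = d.toProd.swap.1 := by rw [heq]
        simpa using h1
      exact d.fst_ne_snd this
  have hL2sum : (L2.map g).sum = (l.map (· ^ 2)).sum * 2 := by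
    rw [hL2, List.map_append, List.sum_append, hl, List.map_map, List.map_map, List.map_map]
    have h1 : (g ∘ fun d : G.Dart => d.toProd) = fun d : G.Dart => (v d.fst - v d.snd) ^ 2 := by
      funext d; simp [hg]
    have h2 : (g ∘ fun d : G.Dart => d.toProd.swap)
        = fun d : G.Dart => (v d.fst - v d.snd) ^ 2 := by
      funext d; simp [hg]; ring
    have h3 : ((· ^ 2) ∘ fun d : G.Dart => v d.fst - v d.snd)
        = fun d : G.Dart => (v d.fst - v d.snd) ^ 2 := by
      funext d; simp
    rw [h1, h2, h3]; ring
  have hsub : L2.toFinset ⊆ Finset.univ.filter (fun q : V × V => G.Adj q.1 q.2) := by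
    intro q hq
    rw [List.mem_toFinset, hL2, List.mem_append] at hq
    rw [Finset.mem_filter]
    refine ⟨Finset.mem_univ _, ?_⟩
    rcases hq with hq | hq
    · obtain ⟨d, _, rfl⟩ := List.mem_map.mp hq
      exact d.adj
    · obtain ⟨d, _, rfl⟩ := List.mem_map.mp hq
      exact d.adj.symm
  have hpathQ : (l.map (· ^ 2)).sum * 2 ≤ Q := by
    rw [← hL2sum, ← List.sum_toFinset g hL2nd]
    have h1 : ∑ q ∈ L2.toFinset, g q
        ≤ ∑ q ∈ Finset.univ.filter (fun q : V × V => G.Adj q.1 q.2), g q := by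
      refine Finset.sum_le_sum_of_subset_of_nonneg hsub fun q _ _ => ?_
      rw [hg]; positivity
    have h2 : ∑ q ∈ Finset.univ.filter (fun q : V × V => G.Adj q.1 q.2), g q = Q := by
      rw [hQ, swap_sum G (fun x y => (v x - v y) ^ 2)]
    linarith
  -- put everything together
  have hls : 0 ≤ (l.map (· ^ 2)).sum := by
    apply List.sum_nonneg; intro x hx
    obtain ⟨y, _, rfl⟩ := List.mem_map.mp hx; positivity
  have hplen : (p.length : ℝ) ≤ (D : ℝ) := by exact_mod_cast hlenD
  have hDr : (1:ℝ) ≤ (D : ℝ) := by exact_mod_cast hD1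
  have hNr : (2:ℝ) ≤ (n : ℝ) := by rw [hn]; exact_mod_cast hcard
  have hchain : S2 ≤ (n:ℝ) * (D:ℝ) * lam * S2 := by
    have c1 : (v x0 - v y0) ^ 2 ≤ (D:ℝ) * (lam * S2) := by
      calc (v x0 - v y0) ^ 2 ≤ (p.length : ℝ) * (l.map (· ^ 2)).sum := hCS
      _ ≤ (D:ℝ) * (l.map (· ^ 2)).sum := by
          apply mul_le_mul_of_nonneg_right hplen hls
      _ ≤ (D:ℝ) * (lam * S2) := by
          apply mul_le_mul_of_nonneg_left _ (by linarith)
          nlinarith [hpathQ, hQval]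
    calc S2 ≤ (n:ℝ) * v x0 ^ 2 := hS2n
    _ ≤ (n:ℝ) * (v x0 - v y0) ^ 2 := by
        apply mul_le_mul_of_nonneg_left hsq (by linarith)
    _ ≤ (n:ℝ) * ((D:ℝ) * (lam * S2)) := by
        apply mul_le_mul_of_nonneg_left c1 (by linarith)
    _ = (n:ℝ) * (D:ℝ) * lam * S2 := by ring
  have hfin : 1 ≤ (n:ℝ) * (D:ℝ) * lam := by
    by_contra h
    push_neg at h
    have h4 := mul_lt_mul_of_pos_right h hS2pos
    rw [one_mul] at h4
    linarith
  have h2 : 1 / (2 * (n:ℝ) * (m:ℝ) * (D:ℝ)) ≤ 1 - μ := by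
    rw [div_le_iff₀ (by positivity)]
    rw [hlam] at hfin
    have h3 : (1 - μ) * (2 * (n:ℝ) * (m:ℝ) * (D:ℝ))
        = 2 * ((n:ℝ) * (D:ℝ) * ((m:ℝ) * (1 - μ))) := by ring
    linarith [hfin]
  linarith
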